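/- Let $\Sigma \in \mathbb{R}^{d_1\times d_2}$ with singular value decomposition $\Sigma = P\Lambda Q^\top$, where the singular values $\lambda_1 \geq \lambda_2 \geq \cdots$ satisfy $\lambda_r > \lambda_{r+1}$. Consider $\mathcal{L}'(G_1, G_2) = -\operatorname{tr}(G_1 \Sigma G_2^\top) + \frac{\alpha}{4}\|GG^\top - I_r\|_F^2$ where $G = [G_1, G_2] \in \mathbb{R}^{r\times(d_1+d_2)}$ and $\alpha > 0$. Then every global minimizer has the form $G_1 = \frac{1}{\sqrt 2} V(I_r + \frac{1}{\alpha}\Lambda_{[r]})^{1/2}P_{[r]}^\top$ and $G_2 = \frac{1}{\sqrt 2} V(I_r + \frac{1}{\alpha}\Lambda_{[r]})^{1/2}Q_{[r]}^\top$ for some orthogonal $V \in \mathbb{R}^{r\times r}$, where $\Lambda_{[r]} = \mathrm{diag}(\lambda_1,\dots,\lambda_r)$ and $P_{[r]}, Q_{[r]}$ are the corresponding top-$r$ left and right singular vectors. -/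

import Mathlib

open Matrix

/-- Squared Frobenius norm of a real matrix. -/
noncomputable def frobNormSq {m n : Type*} [Fintype m] [Fintype n]
    (A : Matrix m n ℝ) : ℝ := ∑ i, ∑ j, (A i j) ^ 2

/-- The linearized CLIP loss with orthogonality penalty. -/
noncomputable def clipLoss {r d1 d2 : ℕ} (α : ℝ) (S : Matrix (Fin d1) (Fin d2) ℝ)
    (G1 : Matrix (Fin r) (Fin d1) ℝ) (G2 : Matrix (Fin r) (Fin d2) ℝ) : ℝ :=
  -Matrix.trace (G1 * S * G2ᵀ) +
    (α / 4) * frobNormSq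
      (Matrix.fromCols G1 G2 * (Matrix.fromCols G1 G2)ᵀ - 1)

namespace ClipProof
set_option maxHeartbeats 2000000

lemma frob_eq_trace {m n : Type*} [Fintype m] [Fintype n] (A : Matrix m n ℝ) :
    frobNormSq A = Matrix.trace (A * Aᵀ) := by
  unfold frobNormSq Matrix.trace
  simp [Matrix.diag, Matrix.mul_apply, sq]

lemma frob_nonneg {m n : Type*} [Fintype m] [Fintype n] (A : Matrix m n ℝ) :
    0 ≤ frobNormSq A :=
  Finset.sum_nonneg fun _ _ => Finset.sum_nonneg fun _ _ => sq_nonneg _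

lemma frob_eq_zero {m n : Type*} [Fintype m] [Fintype n] {A : Matrix m n ℝ}
    (h : frobNormSq A = 0) : A = 0 := by
  ext i j
  unfold frobNormSq at h
  have h1 : ∀ i ∈ (Finset.univ : Finset m), (∑ j, (A i j)^2) = 0 := by
    rw [Finset.sum_eq_zero_iff_of_nonneg] at h
    · exact fun i hi => h i hi
    · exact fun i _ => Finset.sum_nonneg fun j _ => sq_nonneg _
  have h2 := h1 i (Finset.mem_univ i)
  rw [Finset.sum_eq_zero_iff_of_nonneg (fun j _ => sq_nonneg _)] at h2
  have := h2 j (Finset.mem_univ j)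
  simpa [sq_eq_zero_iff] using this

lemma trace_cross_comm {m n : Type*} [Fintype m] [Fintype n] (A B : Matrix m n ℝ) :
    Matrix.trace (A * Bᵀ) = Matrix.trace (B * Aᵀ) := by
  rw [← Matrix.trace_transpose (A * Bᵀ), Matrix.transpose_mul, Matrix.transpose_transpose,
    Matrix.trace_mul_comm]

lemma frob_add {m n : Type*} [Fintype m] [Fintype n] (A B : Matrix m n ℝ) :
    frobNormSq (A + B) = frobNormSq A + 2 * Matrix.trace (A * Bᵀ) + frobNormSq B := by
  rw [frob_eq_trace, frob_eq_trace, frob_eq_trace, Matrix.transpose_add, Matrix.add_mul, Matrix.mul_add, Matrix.mul_add, Matrix.trace_add, Matrix.trace_add, Matrix.trace_add, trace_cross_comm B A]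
  ring

lemma frob_smul {m n : Type*} [Fintype m] [Fintype n] (s : ℝ) (A : Matrix m n ℝ) :
    frobNormSq (s • A) = s^2 * frobNormSq A := by
  unfold frobNormSq
  simp [mul_pow, Finset.mul_sum]

lemma linear_coeff_zero {a b c e : ℝ}
    (h : ∀ t : ℝ, 0 ≤ a * t + b * t^2 + c * t^3 + e * t^4) : a = 0 := by
  set g : ℝ → ℝ := fun t => a + b * t + c * t^2 + e * t^3 with hg
  have hcont : Continuous g := by fun_prop
  have hfac : ∀ t : ℝ, a * t + b * t^2 + c * t^3 + e * t^4 = t * g t := by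
    intro t; simp only [hg]; ring
  have h1 : ∀ t : ℝ, 0 < t → 0 ≤ g t := by
    intro t ht
    have := h t; rw [hfac] at this
    exact nonneg_of_mul_nonneg_right this ht
  have h2 : ∀ t : ℝ, t < 0 → g t ≤ 0 := by
    intro t ht
    have := h t; rw [hfac] at this
    nlinarith
  have ha : a = g 0 := by simp [hg]
  have hge : 0 ≤ g 0 := by
    refine ge_of_tendsto ((hcont.tendsto 0).mono_left (nhdsWithin_le_nhds (s := Set.Ioi 0))) ?_
    filter_upwards [self_mem_nhdsWithin] with t ht
    exact h1 t ht
  have hle : g 0 ≤ 0 := by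
    refine le_of_tendsto ((hcont.tendsto 0).mono_left (nhdsWithin_le_nhds (s := Set.Iio 0))) ?_
    filter_upwards [self_mem_nhdsWithin] with t ht
    exact h2 t ht
  rw [ha]; linarith


lemma frob_neg {m n : Type*} [Fintype m] [Fintype n] (A : Matrix m n ℝ) :
    frobNormSq (-A) = frobNormSq A := by
  unfold frobNormSq
  simp

lemma frob_sub {m n : Type*} [Fintype m] [Fintype n] (A B : Matrix m n ℝ) :
    frobNormSq (A - B) = frobNormSq A - 2 * Matrix.trace (A * Bᵀ) + frobNormSq B := by
  rw [sub_eq_add_neg, frob_add, frob_neg, Matrix.transpose_neg, Matrix.mul_neg,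
    Matrix.trace_neg]
  ring

lemma trace_fromBlocks {m n : Type*} [Fintype m] [Fintype n]
    (A : Matrix m m ℝ) (B : Matrix m n ℝ) (C : Matrix n m ℝ) (D : Matrix n n ℝ) :
    Matrix.trace (Matrix.fromBlocks A B C D) = Matrix.trace A + Matrix.trace D := by
  simp [Matrix.trace, Matrix.diag, Fintype.sum_sum_type, Matrix.fromBlocks]

lemma frob_conj {m : Type*} [Fintype m] [DecidableEq m] (O X : Matrix m m ℝ)
    (hOO : Oᵀ * O = 1) (hOOT : O * Oᵀ = 1) :
    frobNormSq (Oᵀ * X * O) = frobNormSq X := by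
  rw [frob_eq_trace, frob_eq_trace, Matrix.transpose_mul, Matrix.transpose_mul,
    Matrix.transpose_transpose]
  have : Oᵀ * X * O * (Oᵀ * (Xᵀ * O)) = Oᵀ * (X * Xᵀ) * O := by
    calc Oᵀ * X * O * (Oᵀ * (Xᵀ * O)) = Oᵀ * X * (O * Oᵀ) * (Xᵀ * O) := by
          simp only [Matrix.mul_assoc]
    _ = Oᵀ * (X * Xᵀ) * O := by rw [hOOT]; simp only [Matrix.mul_one, Matrix.mul_assoc]
  rw [this, Matrix.trace_mul_cycle, hOOT, Matrix.one_mul]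

lemma gram_frob {r : ℕ} {d : Type*} [Fintype d] (G : Matrix (Fin r) d ℝ) :
    frobNormSq (Gᵀ * G) = frobNormSq (G * Gᵀ) := by
  rw [frob_eq_trace, frob_eq_trace]
  simp only [Matrix.transpose_mul, Matrix.transpose_transpose]
  rw [Matrix.mul_assoc, Matrix.trace_mul_comm]
  simp only [Matrix.mul_assoc]

lemma loss_identity {r d1 d2 : ℕ} (α : ℝ) (hα : 0 < α) (S : Matrix (Fin d1) (Fin d2) ℝ)
    (G1 : Matrix (Fin r) (Fin d1) ℝ) (G2 : Matrix (Fin r) (Fin d2) ℝ) :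
    clipLoss α S G1 G2
      = (α/4) * frobNormSq ((Matrix.fromCols G1 G2)ᵀ * Matrix.fromCols G1 G2
          - Matrix.fromBlocks 1 (α⁻¹ • S) (α⁻¹ • Sᵀ) 1)
        + (α/4) * ((r:ℝ)
          - frobNormSq (Matrix.fromBlocks 1 (α⁻¹ • S) (α⁻¹ • Sᵀ) (1 : Matrix (Fin d2) (Fin d2) ℝ))) := by
  obtain ⟨G, hG⟩ : ∃ G, G = Matrix.fromCols G1 G2 := ⟨_, rfl⟩
  obtain ⟨C, hC⟩ : ∃ C, C = Matrix.fromBlocks (1 : Matrix (Fin d1) (Fin d1) ℝ) (α⁻¹ • S)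
    (α⁻¹ • Sᵀ) (1 : Matrix (Fin d2) (Fin d2) ℝ) := ⟨_, rfl⟩
  rw [← hG, ← hC, clipLoss]
  rw [show Matrix.fromCols G1 G2 = G from hG.symm]
  -- expansion of the two Frobenius norms
  have hs1 : frobNormSq (G * Gᵀ - 1)
      = frobNormSq (G * Gᵀ) - 2 * Matrix.trace (G * Gᵀ) + (r:ℝ) := by
    rw [frob_sub, Matrix.transpose_one, Matrix.mul_one, frob_eq_trace 1, Matrix.transpose_one,
      Matrix.one_mul, Matrix.trace_one, Fintype.card_fin]
  have hs2 : frobNormSq (Gᵀ * G - C)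
      = frobNormSq (Gᵀ * G) - 2 * Matrix.trace (Gᵀ * G * Cᵀ) + frobNormSq C := frob_sub _ _
  have hCt : Cᵀ = C := by
    rw [hC, Matrix.fromBlocks_transpose, Matrix.transpose_one, Matrix.transpose_one,
      Matrix.transpose_smul, Matrix.transpose_smul, Matrix.transpose_transpose]
  have hGtG : Gᵀ * G = Matrix.fromBlocks (G1ᵀ * G1) (G1ᵀ * G2) (G2ᵀ * G1) (G2ᵀ * G2) := by
    rw [hG, Matrix.transpose_fromCols, Matrix.fromRows_mul_fromCols]
  have hGGt : G * Gᵀ = G1 * G1ᵀ + G2 * G2ᵀ := by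
    rw [hG, Matrix.transpose_fromCols, Matrix.fromCols_mul_fromRows]
  have hcross : Matrix.trace (Gᵀ * G * Cᵀ)
      = Matrix.trace (G * Gᵀ) + (2/α) * Matrix.trace (G1 * S * G2ᵀ) := by
    rw [hCt, hC, hGtG, Matrix.fromBlocks_multiply, trace_fromBlocks]
    rw [Matrix.trace_add, Matrix.trace_add, Matrix.mul_one, Matrix.mul_one,
      Matrix.mul_smul, Matrix.mul_smul, Matrix.trace_smul, Matrix.trace_smul]
    have t1 : Matrix.trace (G1ᵀ * G2 * Sᵀ) = Matrix.trace (G1 * S * G2ᵀ) := by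
      rw [← Matrix.trace_transpose (G1ᵀ * G2 * Sᵀ), Matrix.transpose_mul, Matrix.transpose_mul,
        Matrix.transpose_transpose, Matrix.transpose_transpose, ← Matrix.mul_assoc,
        Matrix.trace_mul_cycle]
    have t2 : Matrix.trace (G2ᵀ * G1 * S) = Matrix.trace (G1 * S * G2ᵀ) := by
      rw [Matrix.trace_mul_cycle, Matrix.trace_mul_cycle]
    have t3 : Matrix.trace (G1ᵀ * G1) = Matrix.trace (G1 * G1ᵀ) := Matrix.trace_mul_comm _ _
    have t4 : Matrix.trace (G2ᵀ * G2) = Matrix.trace (G2 * G2ᵀ) := Matrix.trace_mul_comm _ _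
    rw [t1, t2, t3, t4, hGGt, Matrix.trace_add]
    have hα' : α ≠ 0 := ne_of_gt hα
    field_simp
    simp only [smul_eq_mul, one_div]
    linear_combination (2 * Matrix.trace (G1 * S * G2ᵀ)) * mul_inv_cancel₀ hα'
  rw [hs1, hs2, gram_frob, hcross]
  field_simp
  ring

noncomputable def cfun (d1 d2 : ℕ) (lam : ℕ → ℝ) (α : ℝ) : Fin d1 ⊕ Fin d2 → ℝ :=
  Sum.elim (fun j => if (j:ℕ) < d2 then 1 + lam j / α else 1)
           (fun j => if (j:ℕ) < d1 then 1 - lam j / α else 1)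

noncomputable def Omat (d1 d2 : ℕ) (P : Matrix (Fin d1) (Fin d1) ℝ)
    (Q : Matrix (Fin d2) (Fin d2) ℝ) :
    Matrix (Fin d1 ⊕ Fin d2) (Fin d1 ⊕ Fin d2) ℝ :=
  Matrix.of fun a b =>
    match a, b with
    | .inl x, .inl j => (if (j:ℕ) < d2 then (Real.sqrt 2)⁻¹ else 1) * P x j
    | .inr y, .inl j => if h : (j:ℕ) < d2 then (Real.sqrt 2)⁻¹ * Q y ⟨j, h⟩ else 0
    | .inl x, .inr j => if h : (j:ℕ) < d1 then (Real.sqrt 2)⁻¹ * P x ⟨j, h⟩ else 0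
    | .inr y, .inr j => (if (j:ℕ) < d1 then -(Real.sqrt 2)⁻¹ else 1) * Q y j


lemma sum_mul_mul {n : Type*} [Fintype n] (u v : ℝ) (f g : n → ℝ) :
    ∑ x, (u * f x) * (v * g x) = (u * v) * ∑ x, f x * g x := by
  rw [Finset.mul_sum]; exact Finset.sum_congr rfl fun x _ => by ring

lemma s_sq : ((Real.sqrt 2)⁻¹) * ((Real.sqrt 2)⁻¹) = 2⁻¹ := by
  rw [← mul_inv]
  rw [Real.mul_self_sqrt (by norm_num : (2:ℝ) ≥ 0)]

lemma orth_entry {n : ℕ} {P : Matrix (Fin n) (Fin n) ℝ} (hP : Pᵀ * P = 1)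
    (j j' : Fin n) : ∑ x, P x j * P x j' = if j = j' then 1 else 0 := by
  have := congrFun (congrFun hP j) j'
  rw [Matrix.mul_apply] at this
  simp only [Matrix.transpose_apply, Matrix.one_apply] at this
  exact this

lemma Omat_orth {d1 d2 : ℕ} (P : Matrix (Fin d1) (Fin d1) ℝ)
    (Q : Matrix (Fin d2) (Fin d2) ℝ) (hP : Pᵀ * P = 1) (hQ : Qᵀ * Q = 1) :
    (Omat d1 d2 P Q)ᵀ * Omat d1 d2 P Q = 1 := by
  have hPe := orth_entry hP
  have hQe := orth_entry hQ
  ext a b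
  rw [Matrix.mul_apply]
  simp only [Matrix.transpose_apply, Fintype.sum_sum_type]
  rcases a with j | j <;> rcases b with j' | j'
  · -- inl / inl
    simp only [Omat, Matrix.of_apply]
    by_cases h2 : (j:ℕ) < d2 <;> by_cases h2' : (j':ℕ) < d2
    · simp only [if_pos h2, if_pos h2', dif_pos h2, dif_pos h2']
      rw [sum_mul_mul, sum_mul_mul, hPe, hQe]
      by_cases hjj : j = j'
      · subst hjj
        rw [s_sq, Matrix.one_apply_eq]
        norm_num
      · have hne : (⟨(j:ℕ), h2⟩ : Fin d2) ≠ ⟨(j':ℕ), h2'⟩ := by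
          simp only [ne_eq, Fin.mk.injEq]
          exact fun h => hjj (Fin.ext h)
        rw [if_neg hjj, if_neg hne, Matrix.one_apply_ne (by simp [hjj])]
        ring
    · have hjj : j ≠ j' := fun h => h2' (h ▸ h2)
      simp only [if_pos h2, if_neg h2', dif_pos h2, dif_neg h2']
      rw [sum_mul_mul]
      have : ∀ y, (Real.sqrt 2)⁻¹ * Q y ⟨(j:ℕ), h2⟩ * 0 = 0 := fun y => by ring
      rw [Finset.sum_congr rfl (fun y _ => mul_zero _), Finset.sum_const_zero, hPe,
        if_neg hjj, Matrix.one_apply_ne (by simp [hjj])]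
      ring
    · have hjj : j ≠ j' := fun h => h2 (h ▸ h2')
      simp only [if_neg h2, if_pos h2', dif_neg h2, dif_pos h2']
      rw [sum_mul_mul]
      rw [Finset.sum_congr rfl (fun y _ => zero_mul _), Finset.sum_const_zero, hPe,
        if_neg hjj, Matrix.one_apply_ne (by simp [hjj])]
      ring
    · simp only [if_neg h2, if_neg h2', dif_neg h2, dif_neg h2']
      rw [sum_mul_mul]
      rw [Finset.sum_congr rfl (fun y _ => zero_mul _), Finset.sum_const_zero, hPe]
      by_cases hjj : j = j'
      · subst hjj; rw [if_pos rfl, Matrix.one_apply_eq]; ring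
      · rw [if_neg hjj, Matrix.one_apply_ne (by simp [hjj])]; ring
  · -- inl / inr
    simp only [Omat, Matrix.of_apply]
    rw [Matrix.one_apply_ne (by simp)]
    by_cases hvv : (j:ℕ) = (j':ℕ)
    · have h2 : (j:ℕ) < d2 := hvv ▸ j'.isLt
      have h1 : (j':ℕ) < d1 := hvv ▸ j.isLt
      simp only [dif_pos h2, dif_pos h1, if_pos h2, if_pos h1]
      have e1 : (⟨(j':ℕ), h1⟩ : Fin d1) = j := by apply Fin.ext; exact hvv.symm
      have e2 : (⟨(j:ℕ), h2⟩ : Fin d2) = j' := by apply Fin.ext; exact hvv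
      rw [e1, e2, sum_mul_mul, sum_mul_mul, hPe, hQe, if_pos rfl, if_pos rfl]
      ring
    · by_cases h1 : (j':ℕ) < d1 <;> by_cases h2 : (j:ℕ) < d2
      · simp only [dif_pos h1, dif_pos h2, if_pos h1, if_pos h2]
        have e1 : j ≠ ⟨(j':ℕ), h1⟩ := fun h => hvv (congrArg Fin.val h)
        have e2 : (⟨(j:ℕ), h2⟩ : Fin d2) ≠ j' := fun h => hvv (congrArg Fin.val h)
        rw [sum_mul_mul, sum_mul_mul, hPe, hQe, if_neg e1, if_neg e2]
        ring
      · simp only [dif_pos h1, dif_neg h2, if_pos h1]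
        have e1 : j ≠ ⟨(j':ℕ), h1⟩ := fun h => hvv (congrArg Fin.val h)
        rw [sum_mul_mul, hPe, if_neg e1]
        rw [Finset.sum_congr rfl (fun y _ => zero_mul _), Finset.sum_const_zero]
        ring
      · simp only [dif_neg h1, dif_pos h2]
        rw [Finset.sum_congr rfl (fun x _ => mul_zero _), Finset.sum_const_zero]
        have : ∀ y, (Real.sqrt 2)⁻¹ * Q y ⟨(j:ℕ), h2⟩ * ((if (j':ℕ) < d1 then -(Real.sqrt 2)⁻¹ else 1) * Q y j')
            = ((Real.sqrt 2)⁻¹ * (if (j':ℕ) < d1 then -(Real.sqrt 2)⁻¹ else 1)) * (Q y ⟨(j:ℕ), h2⟩ * Q y j') := fun y => by ring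
        rw [Finset.sum_congr rfl (fun y _ => this y), ← Finset.mul_sum, hQe]
        have e2 : (⟨(j:ℕ), h2⟩ : Fin d2) ≠ j' := fun h => hvv (congrArg Fin.val h)
        rw [if_neg e2]
        ring
      · simp only [dif_neg h1, dif_neg h2]
        rw [Finset.sum_congr rfl (fun x _ => mul_zero _), Finset.sum_const_zero,
          Finset.sum_congr rfl (fun y _ => zero_mul _), Finset.sum_const_zero]
        ring
  · -- inr / inl
    simp only [Omat, Matrix.of_apply]
    rw [Matrix.one_apply_ne (by simp)]
    by_cases hvv : (j:ℕ) = (j':ℕ)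
    · have h1 : (j:ℕ) < d1 := hvv ▸ j'.isLt
      have h2 : (j':ℕ) < d2 := hvv ▸ j.isLt
      simp only [dif_pos h1, dif_pos h2, if_pos h1, if_pos h2]
      have e1 : (⟨(j:ℕ), h1⟩ : Fin d1) = j' := by apply Fin.ext; exact hvv
      have e2' : (⟨(j':ℕ), h2⟩ : Fin d2) = j := by apply Fin.ext; exact hvv.symm
      rw [e1, e2', sum_mul_mul, sum_mul_mul, hPe, hQe, if_pos rfl, if_pos rfl]
      ring
    · by_cases h1 : (j:ℕ) < d1 <;> by_cases h2 : (j':ℕ) < d2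
      · simp only [dif_pos h1, dif_pos h2, if_pos h1, if_pos h2]
        have e1 : (⟨(j:ℕ), h1⟩ : Fin d1) ≠ j' := fun h => hvv (congrArg Fin.val h)
        have e2 : j ≠ ⟨(j':ℕ), h2⟩ := fun h => hvv ((congrArg Fin.val h).symm).symm
        rw [sum_mul_mul, sum_mul_mul, hPe, hQe, if_neg e1, if_neg e2]
        ring
      · simp only [dif_pos h1, dif_neg h2, if_pos h1]
        have e1 : (⟨(j:ℕ), h1⟩ : Fin d1) ≠ j' := fun h => hvv (congrArg Fin.val h)
        rw [sum_mul_mul, hPe, if_neg e1]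
        rw [Finset.sum_congr rfl (fun y _ => mul_zero _), Finset.sum_const_zero]
        ring
      · simp only [dif_neg h1, dif_pos h2]
        rw [Finset.sum_congr rfl (fun x _ => zero_mul _), Finset.sum_const_zero]
        have : ∀ y, ((if (j:ℕ) < d1 then -(Real.sqrt 2)⁻¹ else 1) * Q y j) * ((Real.sqrt 2)⁻¹ * Q y ⟨(j':ℕ), h2⟩)
            = (((if (j:ℕ) < d1 then -(Real.sqrt 2)⁻¹ else 1)) * (Real.sqrt 2)⁻¹) * (Q y j * Q y ⟨(j':ℕ), h2⟩) := fun y => by ring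
        rw [Finset.sum_congr rfl (fun y _ => this y), ← Finset.mul_sum, hQe]
        have e2 : j ≠ (⟨(j':ℕ), h2⟩ : Fin d2) := fun h => hvv (congrArg Fin.val h)
        rw [if_neg e2]
        ring
      · simp only [dif_neg h1, dif_neg h2]
        rw [Finset.sum_congr rfl (fun x _ => zero_mul _), Finset.sum_const_zero,
          Finset.sum_congr rfl (fun y _ => mul_zero _), Finset.sum_const_zero]
        ring
  · -- inr / inr
    simp only [Omat, Matrix.of_apply]
    by_cases h1 : (j:ℕ) < d1 <;> by_cases h1' : (j':ℕ) < d1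
    · simp only [dif_pos h1, dif_pos h1', if_pos h1, if_pos h1']
      rw [sum_mul_mul, sum_mul_mul, hPe, hQe]
      by_cases hjj : j = j'
      · subst hjj
        rw [if_pos rfl, if_pos rfl, Matrix.one_apply_eq]
        have : -(Real.sqrt 2)⁻¹ * -(Real.sqrt 2)⁻¹ = 2⁻¹ := by
          rw [neg_mul_neg, s_sq]
        rw [this, s_sq]
        norm_num
      · have hne : (⟨(j:ℕ), h1⟩ : Fin d1) ≠ ⟨(j':ℕ), h1'⟩ := by
          simp only [ne_eq, Fin.mk.injEq]
          exact fun h => hjj (Fin.ext h)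
        rw [if_neg hjj, if_neg hne, Matrix.one_apply_ne (by simp [hjj])]
        ring
    · have hjj : j ≠ j' := fun h => h1' (h ▸ h1)
      simp only [dif_pos h1, dif_neg h1', if_pos h1, if_neg h1']
      rw [Finset.sum_congr rfl (fun x _ => mul_zero _), Finset.sum_const_zero, sum_mul_mul,
        hQe, if_neg hjj, Matrix.one_apply_ne (by simp [hjj])]
      ring
    · have hjj : j ≠ j' := fun h => h1 (h ▸ h1')
      simp only [dif_neg h1, dif_pos h1', if_neg h1, if_pos h1']
      rw [Finset.sum_congr rfl (fun x _ => zero_mul _), Finset.sum_const_zero, sum_mul_mul,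
        hQe, if_neg hjj, Matrix.one_apply_ne (by simp [hjj])]
      ring
    · simp only [dif_neg h1, dif_neg h1', if_neg h1, if_neg h1']
      rw [Finset.sum_congr rfl (fun x _ => zero_mul _), Finset.sum_const_zero, sum_mul_mul,
        hQe]
      by_cases hjj : j = j'
      · subst hjj; rw [if_pos rfl, Matrix.one_apply_eq]; ring
      · rw [if_neg hjj, Matrix.one_apply_ne (by simp [hjj])]; ring

lemma one_mul_sum {n : Type*} [Fintype n] [DecidableEq n] (f : n → ℝ) (x : n) :
    ∑ x', (1 : Matrix n n ℝ) x x' * f x' = f x := by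
  simp [Matrix.one_apply, ite_mul, one_mul, zero_mul, Finset.sum_ite_eq]


lemma CO_eq {d1 d2 : ℕ} (lam : ℕ → ℝ) (α : ℝ) (hα : 0 < α)
    (P : Matrix (Fin d1) (Fin d1) ℝ) (Q : Matrix (Fin d2) (Fin d2) ℝ)
    (hP : Pᵀ * P = 1) (hQ : Qᵀ * Q = 1)
    (S : Matrix (Fin d1) (Fin d2) ℝ)
    (hSVD : S = P * (Matrix.of fun (i : Fin d1) (j : Fin d2) =>
      if (i : ℕ) = (j : ℕ) then lam i else 0) * Qᵀ) :
    Matrix.fromBlocks 1 (α⁻¹ • S) (α⁻¹ • Sᵀ) 1 * Omat d1 d2 P Q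
      = Omat d1 d2 P Q * Matrix.diagonal (cfun d1 d2 lam α) := by
  have hα' : α ≠ 0 := ne_of_gt hα
  obtain ⟨L, hL⟩ : ∃ L : Matrix (Fin d1) (Fin d2) ℝ, L = Matrix.of (fun (i : Fin d1) (j : Fin d2) =>
      if (i : ℕ) = (j : ℕ) then lam i else 0) := ⟨_, rfl⟩
  rw [← hL] at hSVD
  have hSQ : S * Q = P * L := by
    rw [hSVD, Matrix.mul_assoc, hQ, Matrix.mul_one]
  have hPS : Pᵀ * S = L * Qᵀ := by
    rw [hSVD, ← Matrix.mul_assoc, ← Matrix.mul_assoc, hP, Matrix.one_mul]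
  have hPLam : ∀ (x : Fin d1) (j' : Fin d2), (P * L) x j'
      = if h : (j':ℕ) < d1 then P x ⟨j', h⟩ * lam j' else 0 := by
    intro x j'
    rw [Matrix.mul_apply]
    by_cases h : (j':ℕ) < d1
    · rw [dif_pos h]
      rw [Finset.sum_eq_single (⟨(j':ℕ), h⟩ : Fin d1)]
      · rw [hL]
        simp only [Matrix.of_apply]
        simp
      · intro k _ hk
        rw [hL]
        simp only [Matrix.of_apply]
        rw [if_neg (fun (hh : (k:ℕ) = (j':ℕ)) => hk (by apply Fin.ext; exact hh)), mul_zero]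
      · intro h'; exact absurd (Finset.mem_univ _) h'
    · rw [dif_neg h]
      apply Finset.sum_eq_zero
      intro k _
      rw [hL]
      simp only [Matrix.of_apply]
      rw [if_neg (fun (hh : (k:ℕ) = (j':ℕ)) => h (hh ▸ k.isLt)), mul_zero]
  have hLamQ : ∀ (k : Fin d1) (y : Fin d2), (L * Qᵀ) k y
      = if h : (k:ℕ) < d2 then lam k * Q y ⟨k, h⟩ else 0 := by
    intro k y
    rw [Matrix.mul_apply]
    by_cases h : (k:ℕ) < d2
    · rw [dif_pos h]
      rw [Finset.sum_eq_single (⟨(k:ℕ), h⟩ : Fin d2)]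
      · rw [hL]
        simp only [Matrix.of_apply, Matrix.transpose_apply]
        simp
      · intro l _ hl
        rw [hL]
        simp only [Matrix.of_apply, Matrix.transpose_apply]
        rw [if_neg (fun (hh : (k:ℕ) = (l:ℕ)) => hl (by apply Fin.ext; exact hh.symm)), zero_mul]
      · intro h'; exact absurd (Finset.mem_univ _) h'
    · rw [dif_neg h]
      apply Finset.sum_eq_zero
      intro l _
      rw [hL]
      simp only [Matrix.of_apply, Matrix.transpose_apply]
      rw [if_neg (fun (hh : (k:ℕ) = (l:ℕ)) => h (hh.symm ▸ l.isLt)), zero_mul]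
  ext a b
  rw [Matrix.mul_apply, Matrix.mul_diagonal]
  rw [Fintype.sum_sum_type]
  rcases a with x | y <;> rcases b with j | j
  · -- inl inl
    simp only [Matrix.fromBlocks_apply₁₁, Matrix.fromBlocks_apply₁₂, Matrix.smul_apply,
      smul_eq_mul]
    rw [one_mul_sum (fun x' => Omat d1 d2 P Q (Sum.inl x') (Sum.inl j)) x]
    simp only [Omat, Matrix.of_apply, cfun, Sum.elim_inl]
    by_cases h2 : (j:ℕ) < d2
    · simp only [dif_pos h2, if_pos h2]
      rw [sum_mul_mul α⁻¹ ((Real.sqrt 2)⁻¹) (fun y => S x y) (fun y => Q y ⟨(j:ℕ), h2⟩)]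
      have : ∑ y, S x y * Q y ⟨(j:ℕ), h2⟩ = (S * Q) x ⟨(j:ℕ), h2⟩ := by
        rw [Matrix.mul_apply]
      rw [this, hSQ, hPLam]
      have hjd1 : ((⟨(j:ℕ), h2⟩ : Fin d2) : ℕ) < d1 := j.isLt
      rw [dif_pos hjd1]
      have : (⟨((⟨(j:ℕ), h2⟩ : Fin d2) : ℕ), hjd1⟩ : Fin d1) = j := by apply Fin.ext; rfl
      rw [this]
      field_simp
    · simp only [dif_neg h2, if_neg h2]
      rw [Finset.sum_congr rfl (fun y _ => mul_zero (α⁻¹ * S x y)), Finset.sum_const_zero]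
      ring
  · -- inl inr
    simp only [Matrix.fromBlocks_apply₁₁, Matrix.fromBlocks_apply₁₂, Matrix.smul_apply,
      smul_eq_mul]
    rw [one_mul_sum (fun x' => Omat d1 d2 P Q (Sum.inl x') (Sum.inr j)) x]
    simp only [Omat, Matrix.of_apply, cfun, Sum.elim_inr]
    by_cases h1 : (j:ℕ) < d1
    · simp only [dif_pos h1, if_pos h1]
      rw [sum_mul_mul α⁻¹ (-(Real.sqrt 2)⁻¹) (fun y => S x y) (fun y => Q y j)]
      have : ∑ y, S x y * Q y j = (S * Q) x j := by rw [Matrix.mul_apply]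
      rw [this, hSQ, hPLam, dif_pos h1]
      field_simp
      ring
    · simp only [dif_neg h1, if_neg h1]
      rw [sum_mul_mul α⁻¹ 1 (fun y => S x y) (fun y => Q y j)]
      have : ∑ y, S x y * Q y j = (S * Q) x j := by rw [Matrix.mul_apply]
      rw [this, hSQ, hPLam, dif_neg h1]
      ring
  · -- inr inl
    simp only [Matrix.fromBlocks_apply₂₁, Matrix.fromBlocks_apply₂₂, Matrix.smul_apply,
      smul_eq_mul, Matrix.transpose_apply]
    rw [one_mul_sum (fun y' => Omat d1 d2 P Q (Sum.inr y') (Sum.inl j)) y]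
    simp only [Omat, Matrix.of_apply, cfun, Sum.elim_inl]
    by_cases h2 : (j:ℕ) < d2
    · simp only [dif_pos h2, if_pos h2]
      rw [sum_mul_mul α⁻¹ ((Real.sqrt 2)⁻¹) (fun x => S x y) (fun x => P x j)]
      have : ∑ x, S x y * P x j = (Pᵀ * S) j y := by
        rw [Matrix.mul_apply]
        exact Finset.sum_congr rfl fun x _ => by rw [Matrix.transpose_apply]; ring
      rw [this, hPS, hLamQ, dif_pos h2]
      field_simp
      ring
    · simp only [dif_neg h2, if_neg h2]
      rw [sum_mul_mul α⁻¹ 1 (fun x => S x y) (fun x => P x j)]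
      have : ∑ x, S x y * P x j = (Pᵀ * S) j y := by
        rw [Matrix.mul_apply]
        exact Finset.sum_congr rfl fun x _ => by rw [Matrix.transpose_apply]; ring
      rw [this, hPS, hLamQ, dif_neg h2]
      ring
  · -- inr inr
    simp only [Matrix.fromBlocks_apply₂₁, Matrix.fromBlocks_apply₂₂, Matrix.smul_apply,
      smul_eq_mul, Matrix.transpose_apply]
    rw [one_mul_sum (fun y' => Omat d1 d2 P Q (Sum.inr y') (Sum.inr j)) y]
    simp only [Omat, Matrix.of_apply, cfun, Sum.elim_inr]
    by_cases h1 : (j:ℕ) < d1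
    · simp only [dif_pos h1, if_pos h1]
      rw [sum_mul_mul α⁻¹ ((Real.sqrt 2)⁻¹) (fun x => S x y) (fun x => P x ⟨(j:ℕ), h1⟩)]
      have : ∑ x, S x y * P x ⟨(j:ℕ), h1⟩ = (Pᵀ * S) ⟨(j:ℕ), h1⟩ y := by
        rw [Matrix.mul_apply]
        exact Finset.sum_congr rfl fun x _ => by rw [Matrix.transpose_apply]; ring
      rw [this, hPS, hLamQ]
      have hjd2 : ((⟨(j:ℕ), h1⟩ : Fin d1) : ℕ) < d2 := j.isLt
      rw [dif_pos hjd2]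
      have : (⟨((⟨(j:ℕ), h1⟩ : Fin d1) : ℕ), hjd2⟩ : Fin d2) = j := by apply Fin.ext; rfl
      rw [this]
      field_simp
      ring
    · simp only [dif_neg h1, if_neg h1]
      rw [Finset.sum_congr rfl (fun x _ => mul_zero (α⁻¹ * S x y)), Finset.sum_const_zero]
      ring

lemma first_order {r : ℕ} {d : Type*} [Fintype d] [DecidableEq d]
    (H : Matrix (Fin r) d ℝ) (c : d → ℝ)
    (hmin : ∀ H' : Matrix (Fin r) d ℝ,
      frobNormSq (Hᵀ * H - Matrix.diagonal c) ≤ frobNormSq (H'ᵀ * H' - Matrix.diagonal c)) :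
    H * (Hᵀ * H) = H * Matrix.diagonal c := by
  set Δ : Matrix d d ℝ := Matrix.diagonal c with hΔ
  set A : Matrix d d ℝ := Hᵀ * H - Δ with hA
  have hAsym : Aᵀ = A := by
    rw [hA, Matrix.transpose_sub, Matrix.transpose_mul, Matrix.transpose_transpose, hΔ,
      Matrix.diagonal_transpose]
  obtain ⟨W, hW⟩ : ∃ W : Matrix (Fin r) d ℝ, W = H * A := ⟨_, rfl⟩
  -- expansion of the objective along the line H + t • W
  have hDecomp : ∀ t : ℝ, (H + t • W)ᵀ * (H + t • W) - Δ
      = A + t • (Hᵀ * W + Wᵀ * H) + (t^2) • (Wᵀ * W) := by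
    intro t
    rw [Matrix.transpose_add, Matrix.transpose_smul, Matrix.add_mul, Matrix.mul_add,
      Matrix.mul_add, Matrix.smul_mul, Matrix.smul_mul, Matrix.mul_smul, Matrix.mul_smul,
      smul_smul, ← pow_two, hA]
    module
  obtain ⟨B, hB⟩ : ∃ B : Matrix d d ℝ, B = Hᵀ * W + Wᵀ * H := ⟨_, rfl⟩
  obtain ⟨E, hE⟩ : ∃ E : Matrix d d ℝ, E = Wᵀ * W := ⟨_, rfl⟩
  rw [← hB, ← hE] at hDecomp
  have hexp : ∀ t : ℝ, frobNormSq (A + t • B + (t^2) • E)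
      = frobNormSq A + (2 * Matrix.trace (A * Bᵀ)) * t
        + (2 * Matrix.trace (A * Eᵀ) + frobNormSq B) * t^2
        + (2 * Matrix.trace (B * Eᵀ)) * t^3 + frobNormSq E * t^4 := by
    intro t
    rw [add_assoc, frob_add, frob_add, Matrix.transpose_add, Matrix.mul_add, Matrix.trace_add,
      Matrix.transpose_smul, Matrix.transpose_smul, Matrix.mul_smul, Matrix.trace_smul,
      Matrix.mul_smul, Matrix.trace_smul, Matrix.smul_mul, Matrix.mul_smul, Matrix.trace_smul,
      Matrix.trace_smul, frob_smul, frob_smul]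
    simp only [smul_eq_mul]
    ring
  -- the linear coefficient must vanish
  have hkey : ∀ t : ℝ, 0 ≤ (2 * Matrix.trace (A * Bᵀ)) * t
        + (2 * Matrix.trace (A * Eᵀ) + frobNormSq B) * t^2
        + (2 * Matrix.trace (B * Eᵀ)) * t^3 + frobNormSq E * t^4 := by
    intro t
    have h1 := hmin (H + t • W)
    rw [hDecomp t, hexp t] at h1
    linarith
  have hlin : 2 * Matrix.trace (A * Bᵀ) = 0 := linear_coeff_zero hkey
  -- trace (A * Bᵀ) = 2 * trace (W * Wᵀ)
  have htr : Matrix.trace (A * Bᵀ) = 2 * Matrix.trace (W * Wᵀ) := by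
    have t1 : Matrix.trace (A * (Wᵀ * H)ᵀ) = Matrix.trace (W * Wᵀ) := by
      rw [Matrix.transpose_mul, Matrix.transpose_transpose, ← Matrix.mul_assoc,
        Matrix.trace_mul_cycle, ← hAsym, Matrix.mul_assoc, ← Matrix.transpose_mul, ← hW]
    have t2 : Matrix.trace (A * (Hᵀ * W)ᵀ) = Matrix.trace (W * Wᵀ) := by
      rw [Matrix.transpose_mul, Matrix.transpose_transpose, ← Matrix.mul_assoc,
        Matrix.trace_mul_comm, ← Matrix.mul_assoc, ← hW]
    rw [hB, Matrix.transpose_add, Matrix.mul_add, Matrix.trace_add, t1, t2]; ring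
  have hWzero : W = 0 := by
    apply frob_eq_zero
    rw [frob_eq_trace]
    nlinarith [htr, hlin]
  have : H * A = 0 := by rw [← hW]; exact hWzero
  rw [hA, Matrix.mul_sub] at this
  have := sub_eq_zero.mp this
  rw [this]

lemma core {d : Type*} [Fintype d] [DecidableEq d] {r : ℕ}
    (H : Matrix (Fin r) d ℝ) (c : d → ℝ) (t : Fin r → d) (ht : Function.Injective t)
    (m : ℝ) (h1m : 1 ≤ m)
    (hT : ∀ i, m < c (t i))
    (hS : ∀ a, a ∉ Finset.image t Finset.univ → c a ≤ m)
    (hcrit : H * (Hᵀ * H) = H * Matrix.diagonal c)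
    (hval : ∑ i, (c (t i))^2 ≤ ∑ a, c a * ((Hᵀ * H) a a)) :
    Hᵀ * H = Matrix.diagonal
      (fun a => if a ∈ Finset.image t Finset.univ then c a else 0) := by
  obtain ⟨K, hK⟩ : ∃ K : Matrix d d ℝ, K = Hᵀ * H := ⟨_, rfl⟩
  rw [← hK] at hval ⊢
  set T : Finset d := Finset.image t Finset.univ with hTdef
  have hKsym : Kᵀ = K := by
    rw [hK, Matrix.transpose_mul, Matrix.transpose_transpose]
  have k2 : K * K = K * Matrix.diagonal c := by
    calc K * K = Hᵀ * (H * (Hᵀ * H)) := by rw [hK, Matrix.mul_assoc]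
    _ = Hᵀ * (H * Matrix.diagonal c) := by rw [hcrit]
    _ = K * Matrix.diagonal c := by rw [hK, Matrix.mul_assoc]
  have kcomm : Matrix.diagonal c * K = K * Matrix.diagonal c := by
    have h1 := congrArg Matrix.transpose k2
    rw [Matrix.transpose_mul, Matrix.transpose_mul, hKsym, Matrix.diagonal_transpose] at h1
    rw [← h1, ← k2]
  have hsymE : ∀ a b, K a b = K b a := fun a b => congrFun (congrFun hKsym b) a
  have hKapp : ∀ a b, K a b = ∑ i, H i a * H i b := by
    intro a b; rw [hK]; simp [Matrix.mul_apply]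
  have hdnn : ∀ a, 0 ≤ K a a := by
    intro a; rw [hKapp]
    exact Finset.sum_nonneg fun i _ => mul_self_nonneg _
  have hcol0 : ∀ a, K a a = 0 → ∀ b, K a b = 0 := by
    intro a ha b
    rw [hKapp] at ha ⊢
    have hz : ∀ i ∈ (Finset.univ : Finset (Fin r)), H i a * H i a = 0 := by
      rw [← Finset.sum_eq_zero_iff_of_nonneg (fun i _ => mul_self_nonneg (H i a))]
      exact ha
    apply Finset.sum_eq_zero
    intro i hi
    have := mul_self_eq_zero.mp (hz i hi)
    rw [this, zero_mul]
  have hzero : ∀ a b, c a ≠ c b → K a b = 0 := by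
    intro a b hab
    have h1 := congrFun (congrFun kcomm a) b
    rw [Matrix.diagonal_mul, Matrix.mul_diagonal] at h1
    have : K a b * (c a - c b) = 0 := by ring_nf; linarith [h1]
    rcases mul_eq_zero.mp this with h | h
    · exact h
    · exact absurd (sub_eq_zero.mp h) hab
  have k2entry : ∀ a b, (∑ e, K a e * K e b) = K a b * c b := by
    intro a b
    have h1 := congrFun (congrFun k2 a) b
    rw [Matrix.mul_diagonal] at h1
    rw [← h1, Matrix.mul_apply]
  have hsq : ∀ a, ∑ e, (K a e)^2 = K a a * c a := by
    intro a
    rw [← k2entry a a]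
    apply Finset.sum_congr rfl
    intro e _
    rw [hsymE e a, sq]
  have hKle : ∀ a, K a a * K a a ≤ K a a * c a := by
    intro a
    rw [← hsq a]
    have h1 : (K a a)^2 ≤ ∑ e, (K a e)^2 :=
      Finset.single_le_sum (fun e _ => sq_nonneg (K a e)) (Finset.mem_univ a)
    nlinarith [h1]
  have hneg0 : ∀ a, c a ≤ 0 → K a a = 0 := by
    intro a hca
    nlinarith [hKle a, hdnn a, mul_nonpos_of_nonneg_of_nonpos (hdnn a) hca]
  have hKc : ∀ a, 0 < c a → K a a ≤ c a := by
    intro a hca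
    nlinarith [hKle a, hdnn a]
  -- the diagonal weights
  obtain ⟨dp, hdp⟩ : ∃ dp : d → ℝ, dp = fun a => if 0 < c a then (c a)⁻¹ else 0 := ⟨_, rfl⟩
  have hdpnn : ∀ a, 0 ≤ dp a := by
    intro a; rw [hdp]; dsimp only
    split
    · exact inv_nonneg.mpr (le_of_lt (by assumption))
    · exact le_refl 0
  have hdpval : ∀ a, 0 < c a → dp a = (c a)⁻¹ := by
    intro a h; rw [hdp]; exact if_pos h
  have hdpzero : ∀ a, ¬ 0 < c a → dp a = 0 := by
    intro a h; rw [hdp]; exact if_neg h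
  have hcomm_dp : K * Matrix.diagonal dp = Matrix.diagonal dp * K := by
    ext a b
    rw [Matrix.mul_diagonal, Matrix.diagonal_mul]
    by_cases hcc : c a = c b
    · have : dp a = dp b := by rw [hdp]; dsimp only; rw [hcc]
      rw [this, mul_comm]
    · rw [hzero a b hcc, zero_mul, mul_zero]
  have hKE : K * Matrix.diagonal (fun a => dp a * c a) = K := by
    ext a b
    rw [Matrix.mul_diagonal]
    by_cases hcb : 0 < c b
    · rw [hdpval b hcb, inv_mul_cancel₀ (ne_of_gt hcb), mul_one]
    · have hbb : K b b = 0 := hneg0 b (le_of_not_gt hcb)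
      have hba : K a b = 0 := by rw [hsymE a b]; exact hcol0 b hbb a
      rw [hba, zero_mul]
  have hKdpK : K * Matrix.diagonal dp * K = K := by
    calc K * Matrix.diagonal dp * K = Matrix.diagonal dp * K * K := by rw [hcomm_dp]
    _ = Matrix.diagonal dp * (K * Matrix.diagonal c) := by rw [Matrix.mul_assoc, k2]
    _ = K * Matrix.diagonal dp * Matrix.diagonal c := by
        rw [← Matrix.mul_assoc, hcomm_dp]
    _ = K * Matrix.diagonal (fun a => dp a * c a) := by
        rw [Matrix.mul_assoc, Matrix.diagonal_mul_diagonal]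
    _ = K := hKE
  have hKdpK' : K * (Matrix.diagonal dp * K) = K := by
    rw [← Matrix.mul_assoc]; exact hKdpK
  have hA1 : ∀ X : Matrix d (Fin r) ℝ, K * (Matrix.diagonal dp * (K * X)) = K * X := by
    intro X
    rw [← Matrix.mul_assoc, ← Matrix.mul_assoc, hKdpK]
  -- the projection Z and the trace bound
  obtain ⟨Z, hZ⟩ : ∃ Z : Matrix (Fin r) (Fin r) ℝ,
      Z = H * (Matrix.diagonal dp * (K * (Matrix.diagonal dp * Hᵀ))) := ⟨_, rfl⟩
  have hHH : ∀ X : Matrix d (Fin r) ℝ, Hᵀ * (H * X) = K * X := by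
    intro X; rw [← Matrix.mul_assoc, ← hK]
  have hZZ : Z * Z = Z := by
    rw [hZ]
    simp only [Matrix.mul_assoc]
    rw [hHH, hA1, hA1]
  have hZsym : Zᵀ = Z := by
    rw [hZ]
    simp only [Matrix.transpose_mul, Matrix.diagonal_transpose, hKsym,
      Matrix.transpose_transpose, Matrix.mul_assoc]
  have htrZ : Matrix.trace Z = ∑ a, dp a * K a a := by
    rw [hZ, Matrix.trace_mul_comm]
    simp only [Matrix.mul_assoc]
    rw [← hK, hKdpK']
    simp [Matrix.trace, Matrix.diag, Matrix.diagonal_mul]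
  have htrbound : Matrix.trace Z ≤ (r : ℝ) := by
    have h0 : 0 ≤ Matrix.trace ((1 - Z) * (1 - Z)ᵀ) := by
      rw [← frob_eq_trace]; exact frob_nonneg _
    have h1 : (1 - Z) * (1 - Z) = 1 - Z := by
      rw [Matrix.mul_sub, Matrix.sub_mul, Matrix.sub_mul, Matrix.one_mul, Matrix.one_mul, Matrix.mul_one, hZZ]
      abel
    rw [Matrix.transpose_sub, Matrix.transpose_one, hZsym, h1, Matrix.trace_sub,
      Matrix.trace_one] at h0
    simp only [Fintype.card_fin] at h0
    linarith
  have hsum_u : ∑ a, dp a * K a a ≤ (r : ℝ) := by rw [← htrZ]; exact htrbound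
  -- arithmetic finale
  have himg : ∀ f : d → ℝ, ∑ a ∈ T, f a = ∑ i, f (t i) := by
    intro f
    rw [hTdef]
    exact Finset.sum_image (fun x _ y _ h => ht h)
  have hsplit : ∀ f : d → ℝ, ∑ a, f a = ∑ a ∈ T, f a + ∑ a ∈ Tᶜ, f a := by
    intro f
    rw [add_comm, Finset.sum_compl_add_sum]
  have hu0 : ∀ a, 0 ≤ dp a * K a a := fun a => mul_nonneg (hdpnn a) (hdnn a)
  have hu1 : ∀ a, dp a * K a a ≤ 1 := by
    intro a
    by_cases hca : 0 < c a
    · rw [hdpval a hca]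
      calc (c a)⁻¹ * K a a ≤ (c a)⁻¹ * c a :=
            mul_le_mul_of_nonneg_left (hKc a hca) (inv_nonneg.mpr (le_of_lt hca))
      _ = 1 := inv_mul_cancel₀ (ne_of_gt hca)
    · rw [hdpzero a hca, zero_mul]; exact zero_le_one
  have hm0 : 0 < m := lt_of_lt_of_le zero_lt_one h1m
  have hcTpos : ∀ i : Fin r, 0 < c (t i) := fun i => lt_trans hm0 (hT i)
  have huT : ∀ i : Fin r, c (t i) * K (t i) (t i)
      = (c (t i))^2 * (dp (t i) * K (t i) (t i)) := by
    intro i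
    have hne := ne_of_gt (hcTpos i)
    rw [hdpval _ (hcTpos i)]
    field_simp
  have huS : ∀ a, a ∉ T → c a * K a a ≤ m^2 * (dp a * K a a) := by
    intro a ha
    by_cases hca : 0 < c a
    · rw [hdpval a hca]
      have hcm : c a ≤ m := hS a ha
      have h2 : c a * K a a = (c a)^2 * ((c a)⁻¹ * K a a) := by
        have hne := ne_of_gt hca
        field_simp
      rw [h2]
      have hnn : 0 ≤ (c a)⁻¹ * K a a := mul_nonneg (inv_nonneg.mpr (le_of_lt hca)) (hdnn a)
      apply mul_le_mul_of_nonneg_right _ hnn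
      nlinarith
    · rw [hneg0 a (le_of_not_gt hca), hdpzero a hca]
      simp
  have hTC : ∑ a ∈ Tᶜ, dp a * K a a ≤ (r:ℝ) - ∑ i, dp (t i) * K (t i) (t i) := by
    have h := hsum_u
    rw [hsplit (fun a => dp a * K a a), himg] at h
    linarith
  have e6 : ∑ i : Fin r, m^2 * (1 - dp (t i) * K (t i) (t i))
      = m^2 * ((r:ℝ) - ∑ i, dp (t i) * K (t i) (t i)) := by
    rw [← Finset.mul_sum, Finset.sum_sub_distrib, Finset.sum_const, Finset.card_univ,
      Fintype.card_fin, nsmul_eq_mul, mul_one]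
  have hchain : ∑ i, (c (t i))^2
      ≤ ∑ i, ((c (t i))^2 * (dp (t i) * K (t i) (t i))
          + m^2 * (1 - dp (t i) * K (t i) (t i))) := by
    have e1 : ∑ a, c a * K a a
        = ∑ i, c (t i) * K (t i) (t i) + ∑ a ∈ Tᶜ, c a * K a a := by
      rw [hsplit (fun a => c a * K a a), himg]
    have e2 : ∑ a ∈ Tᶜ, c a * K a a ≤ ∑ a ∈ Tᶜ, m^2 * (dp a * K a a) :=
      Finset.sum_le_sum (fun a ha => huS a (Finset.mem_compl.mp ha))
    have e3 : ∑ a ∈ Tᶜ, m^2 * (dp a * K a a) = m^2 * ∑ a ∈ Tᶜ, dp a * K a a :=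
      Finset.mul_sum _ _ _ |>.symm
    have e4 : m^2 * (∑ a ∈ Tᶜ, dp a * K a a)
        ≤ m^2 * ((r:ℝ) - ∑ i, dp (t i) * K (t i) (t i)) :=
      mul_le_mul_of_nonneg_left hTC (by positivity)
    have e5 : ∑ i, c (t i) * K (t i) (t i)
        = ∑ i, (c (t i))^2 * (dp (t i) * K (t i) (t i)) :=
      Finset.sum_congr rfl (fun i _ => huT i)
    rw [Finset.sum_add_distrib, e6]
    calc ∑ i, (c (t i))^2 ≤ ∑ a, c a * K a a := hval
    _ = ∑ i, c (t i) * K (t i) (t i) + ∑ a ∈ Tᶜ, c a * K a a := e1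
    _ ≤ ∑ i, (c (t i))^2 * (dp (t i) * K (t i) (t i))
        + m^2 * ((r:ℝ) - ∑ i, dp (t i) * K (t i) (t i)) := by
        rw [e3] at e2
        rw [← e5]
        linarith
  have hterm : ∀ i : Fin r, 0 ≤ ((c (t i))^2 - m^2) * (1 - dp (t i) * K (t i) (t i)) := by
    intro i
    apply mul_nonneg
    · nlinarith [hT i, hm0]
    · linarith [hu1 (t i)]
  have hsum0 : ∑ i, ((c (t i))^2 - m^2) * (1 - dp (t i) * K (t i) (t i)) ≤ 0 := by
    have expand : ∑ i, ((c (t i))^2 - m^2) * (1 - dp (t i) * K (t i) (t i))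
        = ∑ i, ((c (t i))^2
            - ((c (t i))^2 * (dp (t i) * K (t i) (t i))
              + m^2 * (1 - dp (t i) * K (t i) (t i)))) :=
      Finset.sum_congr rfl (fun i _ => by ring)
    rw [expand, Finset.sum_sub_distrib]
    linarith [hchain]
  have huT1 : ∀ i : Fin r, dp (t i) * K (t i) (t i) = 1 := by
    intro i
    have hz := (Finset.sum_eq_zero_iff_of_nonneg (fun i _ => hterm i)).mp
      (le_antisymm hsum0 (Finset.sum_nonneg (fun i _ => hterm i))) i (Finset.mem_univ i)
    have hfac : (c (t i))^2 - m^2 ≠ 0 := by nlinarith [hT i, hm0]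
    rcases mul_eq_zero.mp hz with h | h
    · exact absurd h hfac
    · linarith
  have hKTd : ∀ i : Fin r, K (t i) (t i) = c (t i) := by
    intro i
    have h := huT1 i
    rw [hdpval _ (hcTpos i)] at h
    have h2 : c (t i) * ((c (t i))⁻¹ * K (t i) (t i)) = c (t i) * 1 := by rw [h]
    rwa [← mul_assoc, mul_inv_cancel₀ (ne_of_gt (hcTpos i)), one_mul, mul_one] at h2
  have hS0 : ∀ a, a ∉ T → K a a = 0 := by
    intro a ha
    have hTu : ∑ i, dp (t i) * K (t i) (t i) = (r:ℝ) := by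
      rw [Finset.sum_congr rfl (fun i _ => huT1 i), Finset.sum_const, Finset.card_univ,
        Fintype.card_fin, nsmul_eq_mul, mul_one]
    have h1 : ∑ a ∈ Tᶜ, dp a * K a a ≤ 0 := by rw [hTu] at hTC; linarith
    have h2 : ∀ b ∈ Tᶜ, dp b * K b b = 0 :=
      (Finset.sum_eq_zero_iff_of_nonneg (fun b _ => hu0 b)).mp
        (le_antisymm h1 (Finset.sum_nonneg fun b _ => hu0 b))
    have h3 := h2 a (Finset.mem_compl.mpr ha)
    by_cases hca : 0 < c a
    · rw [hdpval a hca] at h3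
      rcases mul_eq_zero.mp h3 with h | h
      · exact absurd h (inv_ne_zero (ne_of_gt hca))
      · exact h
    · exact hneg0 a (le_of_not_gt hca)
  have hrow : ∀ i : Fin r, ∀ b, b ≠ t i → K (t i) b = 0 := by
    intro i b hb
    have hs := hsq (t i)
    have hsub : (K (t i) (t i))^2 + (K (t i) b)^2 ≤ ∑ e, (K (t i) e)^2 := by
      have hsset := Finset.sum_le_sum_of_subset_of_nonneg
        (Finset.subset_univ ({t i, b} : Finset d)) (fun e _ _ => sq_nonneg (K (t i) e))
      rw [Finset.sum_pair (fun h => hb h.symm)] at hsset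
      exact hsset
    rw [hKTd i] at hs hsub
    have hle0 : (K (t i) b)^2 ≤ 0 := by nlinarith
    exact sq_eq_zero_iff.mp (le_antisymm hle0 (sq_nonneg _))
  ext a b
  rw [Matrix.diagonal_apply]
  by_cases hab : a = b
  · subst hab
    rw [if_pos rfl]
    by_cases haT : a ∈ T
    · rw [if_pos haT]
      obtain ⟨i, _, rfl⟩ := Finset.mem_image.mp haT
      exact hKTd i
    · rw [if_neg haT]; exact hS0 a haT
  · rw [if_neg hab]
    by_cases haT : a ∈ T
    · obtain ⟨i, _, rfl⟩ := Finset.mem_image.mp haT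
      exact hrow i b (fun h => hab h.symm)
    · exact hcol0 a (hS0 a haT) b


lemma frob_diagonal {d : Type*} [Fintype d] [DecidableEq d] (v : d → ℝ) :
    frobNormSq (Matrix.diagonal v) = ∑ a, (v a)^2 := by
  unfold frobNormSq
  have h : ∀ a b : d, (Matrix.diagonal v a b)^2 = if b = a then (v a)^2 else 0 := by
    intro a b
    rw [Matrix.diagonal_apply]
    by_cases hab : a = b
    · subst hab; simp
    · rw [if_neg hab, if_neg (fun hh => hab hh.symm)]
      norm_num
  simp_rw [h]
  simp

lemma diag_sub {d : Type*} [Fintype d] [DecidableEq d] (v w : d → ℝ) :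
    Matrix.diagonal v - Matrix.diagonal w = Matrix.diagonal (fun a => v a - w a) := by
  ext a b
  simp only [Matrix.sub_apply, Matrix.diagonal_apply]
  split_ifs <;> simp


end ClipProof

set_option maxHeartbeats 2000000 in
/-- Every global minimizer of the linearized CLIP loss is a scaled truncated SVD of `Σ`.
Here `lam i` is the `(i+1)`-st singular value (so the gap `λ_r > λ_{r+1}` reads
`lam r < lam (r-1)`). -/
theorem stmt_11 (d1 d2 r : ℕ) (hr0 : 0 < r) (hr1 : r ≤ d1) (hr2 : r ≤ d2)
    (α : ℝ) (hα : 0 < α)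
    (lam : ℕ → ℝ) (hmono : ∀ i j : ℕ, i ≤ j → lam j ≤ lam i) (hnn : ∀ i, 0 ≤ lam i)
    (hgap : lam r < lam (r - 1))
    (P : Matrix (Fin d1) (Fin d1) ℝ) (Q : Matrix (Fin d2) (Fin d2) ℝ)
    (hP : Pᵀ * P = 1) (hQ : Qᵀ * Q = 1)
    (S : Matrix (Fin d1) (Fin d2) ℝ)
    (hSVD : S = P * (Matrix.of fun (i : Fin d1) (j : Fin d2) => if (i : ℕ) = (j : ℕ) then lam i else 0) * Qᵀ)
    (G1 : Matrix (Fin r) (Fin d1) ℝ) (G2 : Matrix (Fin r) (Fin d2) ℝ)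
    (hmin : ∀ (G1' : Matrix (Fin r) (Fin d1) ℝ) (G2' : Matrix (Fin r) (Fin d2) ℝ),
      clipLoss α S G1 G2 ≤ clipLoss α S G1' G2') :
    ∃ V : Matrix (Fin r) (Fin r) ℝ, Vᵀ * V = 1 ∧
      G1 = (Real.sqrt 2)⁻¹ •
        (V * Matrix.diagonal (fun j : Fin r => Real.sqrt (1 + lam j / α)) *
          (P.submatrix id (Fin.castLE hr1))ᵀ) ∧
      G2 = (Real.sqrt 2)⁻¹ •
        (V * Matrix.diagonal (fun j : Fin r => Real.sqrt (1 + lam j / α)) *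
          (Q.submatrix id (Fin.castLE hr2))ᵀ) := by
  classical
  have hα' : α ≠ 0 := ne_of_gt hα
  obtain ⟨C, hC⟩ : ∃ C, C = Matrix.fromBlocks 1 (α⁻¹ • S) (α⁻¹ • Sᵀ)
    (1 : Matrix (Fin d2) (Fin d2) ℝ) := ⟨_, rfl⟩
  obtain ⟨O, hO⟩ : ∃ O, O = ClipProof.Omat d1 d2 P Q := ⟨_, rfl⟩
  obtain ⟨c, hc⟩ : ∃ c, c = ClipProof.cfun d1 d2 lam α := ⟨_, rfl⟩
  have hOO : Oᵀ * O = 1 := by rw [hO]; exact ClipProof.Omat_orth P Q hP hQ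
  have hOOT : O * Oᵀ = 1 := mul_eq_one_comm.mp hOO
  have hCO : C * O = O * Matrix.diagonal c := by
    rw [hC, hO, hc]; exact ClipProof.CO_eq lam α hα P Q hP hQ S hSVD
  have hdiagc : Matrix.diagonal c = Oᵀ * (C * O) := by
    rw [hCO, ← Matrix.mul_assoc, hOO, Matrix.one_mul]
  obtain ⟨H, hH⟩ : ∃ H, H = Matrix.fromCols G1 G2 * O := ⟨_, rfl⟩
  have hconj : ∀ G' : Matrix (Fin r) (Fin d1 ⊕ Fin d2) ℝ,
      frobNormSq ((G' * O)ᵀ * (G' * O) - Matrix.diagonal c)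
        = frobNormSq (G'ᵀ * G' - C) := by
    intro G'
    have he : (G' * O)ᵀ * (G' * O) - Matrix.diagonal c = Oᵀ * (G'ᵀ * G' - C) * O := by
      rw [Matrix.mul_sub, Matrix.sub_mul, Matrix.transpose_mul, hdiagc]
      simp only [Matrix.mul_assoc]
    rw [he, ClipProof.frob_conj O _ hOO hOOT]
  have hminH : ∀ H' : Matrix (Fin r) (Fin d1 ⊕ Fin d2) ℝ,
      frobNormSq (Hᵀ * H - Matrix.diagonal c)
        ≤ frobNormSq (H'ᵀ * H' - Matrix.diagonal c) := by
    intro H'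
    have hG'back : H' * Oᵀ * O = H' := by rw [Matrix.mul_assoc, hOO, Matrix.mul_one]
    have e3 := hmin (Matrix.toCols₁ (H' * Oᵀ)) (Matrix.toCols₂ (H' * Oᵀ))
    rw [ClipProof.loss_identity α hα S G1 G2, ClipProof.loss_identity α hα S _ _,
      Matrix.fromCols_toCols, ← hC] at e3
    have e1 : frobNormSq (Hᵀ * H - Matrix.diagonal c)
        = frobNormSq ((Matrix.fromCols G1 G2)ᵀ * Matrix.fromCols G1 G2 - C) := by
      rw [hH]; exact hconj _
    have e2 : frobNormSq (H'ᵀ * H' - Matrix.diagonal c)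
        = frobNormSq ((H' * Oᵀ)ᵀ * (H' * Oᵀ) - C) := by
      conv_lhs => rw [← hG'back]
      exact hconj _
    rw [e1, e2]
    have h4 : (0:ℝ) < α/4 := by linarith
    have h5 : (α/4) * frobNormSq ((Matrix.fromCols G1 G2)ᵀ * Matrix.fromCols G1 G2 - C)
        ≤ (α/4) * frobNormSq ((H' * Oᵀ)ᵀ * (H' * Oᵀ) - C) := by linarith [e3]
    exact le_of_mul_le_mul_left h5 h4
  have hcrit : H * (Hᵀ * H) = H * Matrix.diagonal c := ClipProof.first_order H c hminH
  -- the embedding of the top-r indices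
  obtain ⟨t, htdef⟩ : ∃ t : Fin r → Fin d1 ⊕ Fin d2,
      t = fun i => Sum.inl (Fin.castLE hr1 i) := ⟨_, rfl⟩
  have ht : Function.Injective t := by
    rw [htdef]
    intro i i' h
    simp only [Sum.inl.injEq, Fin.ext_iff, Fin.coe_castLE] at h
    exact Fin.ext h
  have hct : ∀ i : Fin r, c (t i) = 1 + lam (i:ℕ) / α := by
    intro i
    rw [hc, htdef]
    simp only [ClipProof.cfun, Sum.elim_inl]
    rw [if_pos (show ((Fin.castLE hr1 i : Fin d1):ℕ) < d2 from lt_of_lt_of_le i.isLt hr2)]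
    rfl
  obtain ⟨m, hm⟩ : ∃ m : ℝ, m = 1 + lam r / α := ⟨_, rfl⟩
  have h1m : (1:ℝ) ≤ m := by
    rw [hm]
    have := div_nonneg (hnn r) (le_of_lt hα)
    linarith
  have hT : ∀ i : Fin r, m < c (t i) := by
    intro i
    rw [hct, hm]
    have hle : (i:ℕ) ≤ r - 1 := by omega
    have h1 : lam (r-1) ≤ lam (i:ℕ) := hmono (i:ℕ) (r-1) hle
    have h2 : lam r < lam (i:ℕ) := lt_of_lt_of_le hgap h1
    have h3 : lam r / α < lam (i:ℕ) / α := by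
      rw [div_eq_mul_inv, div_eq_mul_inv]
      exact mul_lt_mul_of_pos_right h2 (inv_pos.mpr hα)
    linarith
  have hS' : ∀ a, a ∉ Finset.image t Finset.univ → c a ≤ m := by
    intro a ha
    rcases a with j | j
    · have hjr : ¬ ((j:ℕ) < r) := by
        intro hjr
        apply ha
        refine Finset.mem_image.mpr ⟨⟨(j:ℕ), hjr⟩, Finset.mem_univ _, ?_⟩
        rw [htdef]
        apply congrArg
        apply Fin.ext
        rfl
      rw [hc]
      simp only [ClipProof.cfun, Sum.elim_inl]
      split_ifs with h2
      · have h3 := hmono r (j:ℕ) (le_of_not_gt hjr)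
        have h4 : lam (j:ℕ)/α ≤ lam r / α := by
          rw [div_eq_mul_inv, div_eq_mul_inv]
          exact mul_le_mul_of_nonneg_right h3 (inv_nonneg.mpr (le_of_lt hα))
        rw [hm]; linarith
      · rw [hm]
        have := div_nonneg (hnn r) (le_of_lt hα)
        linarith
    · rw [hc]
      simp only [ClipProof.cfun, Sum.elim_inr]
      have hd : 0 ≤ lam r / α := div_nonneg (hnn r) (le_of_lt hα)
      split_ifs with h1
      · have := div_nonneg (hnn (j:ℕ)) (le_of_lt hα)
        rw [hm]; linarith
      · rw [hm]; linarith
  -- the value of the loss at the candidate and at the minimizer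
  have k2 : (Hᵀ * H) * (Hᵀ * H) = (Hᵀ * H) * Matrix.diagonal c := by
    calc (Hᵀ * H) * (Hᵀ * H) = Hᵀ * (H * (Hᵀ * H)) := by rw [Matrix.mul_assoc]
    _ = Hᵀ * (H * Matrix.diagonal c) := by rw [hcrit]
    _ = (Hᵀ * H) * Matrix.diagonal c := by rw [Matrix.mul_assoc]
  have hfH : frobNormSq (Hᵀ * H - Matrix.diagonal c)
      = (∑ a, (c a)^2) - ∑ a, c a * ((Hᵀ * H) a a) := by
    have hKsym : (Hᵀ * H)ᵀ = Hᵀ * H := by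
      rw [Matrix.transpose_mul, Matrix.transpose_transpose]
    have htr1 : Matrix.trace ((Hᵀ * H) * (Matrix.diagonal c)ᵀ) = ∑ a, c a * ((Hᵀ * H) a a) := by
      rw [Matrix.diagonal_transpose]
      simp [Matrix.trace, Matrix.diag, Matrix.mul_diagonal, mul_comm]
    have htr2 : frobNormSq (Hᵀ * H) = ∑ a, c a * ((Hᵀ * H) a a) := by
      rw [ClipProof.frob_eq_trace, hKsym, k2]
      simp [Matrix.trace, Matrix.diag, Matrix.mul_diagonal, mul_comm]
    rw [ClipProof.frob_sub, htr1, htr2, ClipProof.frob_diagonal]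
    ring
  obtain ⟨Hs, hHs⟩ : ∃ Hs : Matrix (Fin r) (Fin d1 ⊕ Fin d2) ℝ,
      Hs = Matrix.of (fun i a => if a = t i then Real.sqrt (c a) else 0) := ⟨_, rfl⟩
  have hcpos : ∀ i, 0 < c (t i) := fun i => lt_trans (lt_of_lt_of_le zero_lt_one h1m) (hT i)
  have hHsG : Hsᵀ * Hs = Matrix.diagonal
      (fun a => if a ∈ Finset.image t Finset.univ then c a else 0) := by
    ext a b
    rw [Matrix.mul_apply, Matrix.diagonal_apply]
    simp only [hHs, Matrix.of_apply, Matrix.transpose_apply]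
    by_cases hab : a = b
    · subst hab
      rw [if_pos rfl]
      by_cases haT : a ∈ Finset.image t Finset.univ
      · obtain ⟨i0, _, hi0⟩ := Finset.mem_image.mp haT
        rw [if_pos haT]
        rw [Finset.sum_eq_single i0]
        · rw [if_pos hi0.symm]
          exact Real.mul_self_sqrt (le_of_lt (hi0 ▸ hcpos i0))
        · intro i _ hne
          rw [if_neg (show ¬ a = t i from fun h => hne (ht (hi0.trans h)).symm)]
          exact zero_mul _
        · intro h; exact absurd (Finset.mem_univ _) h
      · rw [if_neg haT]
        apply Finset.sum_eq_zero
        intro i _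
        rw [if_neg (fun h => haT (Finset.mem_image.mpr ⟨i, Finset.mem_univ _, h.symm⟩))]
        exact zero_mul _
    · rw [if_neg hab]
      apply Finset.sum_eq_zero
      intro i _
      by_cases ha : a = t i
      · rw [if_neg (show ¬ b = t i from fun hb => hab (ha.trans hb.symm))]
        exact mul_zero _
      · rw [if_neg (show ¬ a = t i from ha)]
        exact zero_mul _
  have hfHs : frobNormSq (Hsᵀ * Hs - Matrix.diagonal c)
      = ∑ a, (if a ∈ Finset.image t Finset.univ then 0 else (c a)^2) := by
    rw [hHsG, ClipProof.diag_sub, ClipProof.frob_diagonal]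
    apply Finset.sum_congr rfl
    intro a _
    by_cases haT : a ∈ Finset.image t Finset.univ <;> simp [haT]
  have hval : ∑ i, (c (t i))^2 ≤ ∑ a, c a * ((Hᵀ * H) a a) := by
    have h1 := hminH Hs
    rw [hfHs, hfH] at h1
    have hsp : ∑ a, (c a)^2
        = ∑ a, (if a ∈ Finset.image t Finset.univ then (c a)^2 else 0)
          + ∑ a, (if a ∈ Finset.image t Finset.univ then 0 else (c a)^2) := by
      rw [← Finset.sum_add_distrib]
      exact Finset.sum_congr rfl fun a _ => by split_ifs <;> ring
    have himg2 : ∑ a, (if a ∈ Finset.image t Finset.univ then (c a)^2 else 0)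
        = ∑ i, (c (t i))^2 := by
      rw [Finset.sum_ite_mem, Finset.univ_inter]
      exact Finset.sum_image (fun x _ y _ h => ht h)
    linarith
  have hKdiag : Hᵀ * H = Matrix.diagonal
      (fun a => if a ∈ Finset.image t Finset.univ then c a else 0) :=
    ClipProof.core H c t ht m h1m hT hS' hcrit hval
  -- extraction of the orthogonal factor
  have hH0 : ∀ a, a ∉ Finset.image t Finset.univ → ∀ i, H i a = 0 := by
    intro a ha i
    have h1 : (Hᵀ * H) a a = 0 := by
      rw [hKdiag, Matrix.diagonal_apply_eq, if_neg ha]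
    rw [Matrix.mul_apply] at h1
    simp only [Matrix.transpose_apply] at h1
    have h2 := (Finset.sum_eq_zero_iff_of_nonneg
      (fun i _ => mul_self_nonneg (H i a))).mp h1 i (Finset.mem_univ i)
    exact mul_self_eq_zero.mp h2
  have hKent : ∀ (j k : Fin r), ∑ i, H i (t j) * H i (t k)
      = if j = k then c (t j) else 0 := by
    intro j k
    have h1 := congrFun (congrFun hKdiag (t j)) (t k)
    rw [Matrix.mul_apply, Matrix.diagonal_apply] at h1
    simp only [Matrix.transpose_apply] at h1
    rw [h1]
    by_cases hjk : j = k
    · subst hjk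
      rw [if_pos rfl, if_pos rfl, if_pos (Finset.mem_image.mpr ⟨j, Finset.mem_univ _, rfl⟩)]
    · rw [if_neg (fun h => hjk (ht h)), if_neg hjk]
  obtain ⟨V, hV⟩ : ∃ V : Matrix (Fin r) (Fin r) ℝ,
      V = Matrix.of (fun i j => H i (t j) * (Real.sqrt (1 + lam (j:ℕ)/α))⁻¹) := ⟨_, rfl⟩
  have hbpos : ∀ j : Fin r, 0 < 1 + lam (j:ℕ)/α := by
    intro j
    have := div_nonneg (hnn (j:ℕ)) (le_of_lt hα)
    linarith
  have hsq_pos : ∀ j : Fin r, 0 < Real.sqrt (1 + lam (j:ℕ)/α) :=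
    fun j => Real.sqrt_pos.mpr (hbpos j)
  have hsq_c : ∀ j : Fin r, Real.sqrt (1 + lam (j:ℕ)/α) * Real.sqrt (1 + lam (j:ℕ)/α)
      = 1 + lam (j:ℕ)/α := fun j => Real.mul_self_sqrt (le_of_lt (hbpos j))
  have hVf : ∀ (i j : Fin r), V i j * Real.sqrt (1 + lam (j:ℕ)/α) = H i (t j) := by
    intro i j
    rw [hV]
    simp only [Matrix.of_apply]
    rw [mul_assoc, inv_mul_cancel₀ (ne_of_gt (hsq_pos j)), mul_one]
  refine ⟨V, ?_, ?_, ?_⟩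
  · ext j k
    rw [Matrix.mul_apply]
    simp only [hV, Matrix.of_apply, Matrix.transpose_apply]
    have e : ∀ i : Fin r, (H i (t j) * (Real.sqrt (1 + lam (j:ℕ)/α))⁻¹)
          * (H i (t k) * (Real.sqrt (1 + lam (k:ℕ)/α))⁻¹)
        = (H i (t j) * H i (t k))
          * ((Real.sqrt (1 + lam (j:ℕ)/α))⁻¹ * (Real.sqrt (1 + lam (k:ℕ)/α))⁻¹) :=
      fun i => by ring
    rw [Finset.sum_congr rfl (fun i _ => e i), ← Finset.sum_mul, hKent]
    by_cases hjk : j = k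
    · subst hjk
      rw [if_pos rfl, Matrix.one_apply_eq, hct, ← mul_inv, hsq_c,
        mul_inv_cancel₀ (ne_of_gt (hbpos j))]
    · rw [if_neg hjk, Matrix.one_apply_ne hjk, zero_mul]
  · ext i x
    have hGH : Matrix.fromCols G1 G2 = H * Oᵀ := by
      rw [hH, Matrix.mul_assoc, hOOT, Matrix.mul_one]
    have hG1H : G1 i x = ∑ a, H i a * O (Sum.inl x) a := by
      have h1 : G1 i x = (Matrix.fromCols G1 G2) i (Sum.inl x) :=
        (Matrix.fromCols_apply_inl _ _ _ _).symm
      rw [h1, hGH, Matrix.mul_apply]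
      simp only [Matrix.transpose_apply]
    have hred : ∑ a, H i a * O (Sum.inl x) a
        = ∑ j : Fin r, H i (t j) * O (Sum.inl x) (t j) := by
      rw [← Finset.sum_compl_add_sum (Finset.image t Finset.univ)
        (fun a => H i a * O (Sum.inl x) a)]
      rw [Finset.sum_eq_zero (fun a ha => by
        rw [hH0 a (Finset.mem_compl.mp ha) i, zero_mul]), zero_add]
      exact Finset.sum_image (fun x' _ y _ h => ht h)
    have hOentry : ∀ j : Fin r, O (Sum.inl x) (t j)
        = (Real.sqrt 2)⁻¹ * P x (Fin.castLE hr1 j) := by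
      intro j
      rw [hO, htdef]
      simp only [ClipProof.Omat, Matrix.of_apply]
      rw [if_pos (show ((Fin.castLE hr1 j : Fin d1):ℕ) < d2 from lt_of_lt_of_le j.isLt hr2)]
    rw [hG1H, hred]
    rw [Matrix.smul_apply, smul_eq_mul, Matrix.mul_apply, Finset.mul_sum]
    apply Finset.sum_congr rfl
    intro j _
    rw [Matrix.mul_diagonal, Matrix.transpose_apply, Matrix.submatrix_apply, id_eq,
      hOentry j, ← hVf i j]
    ring
  · ext i y
    have hGH : Matrix.fromCols G1 G2 = H * Oᵀ := by
      rw [hH, Matrix.mul_assoc, hOOT, Matrix.mul_one]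
    have hG2H : G2 i y = ∑ a, H i a * O (Sum.inr y) a := by
      have h1 : G2 i y = (Matrix.fromCols G1 G2) i (Sum.inr y) :=
        (Matrix.fromCols_apply_inr _ _ _ _).symm
      rw [h1, hGH, Matrix.mul_apply]
      simp only [Matrix.transpose_apply]
    have hred : ∑ a, H i a * O (Sum.inr y) a
        = ∑ j : Fin r, H i (t j) * O (Sum.inr y) (t j) := by
      rw [← Finset.sum_compl_add_sum (Finset.image t Finset.univ)
        (fun a => H i a * O (Sum.inr y) a)]
      rw [Finset.sum_eq_zero (fun a ha => by
        rw [hH0 a (Finset.mem_compl.mp ha) i, zero_mul]), zero_add]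
      exact Finset.sum_image (fun x' _ y' _ h => ht h)
    have hOentry : ∀ j : Fin r, O (Sum.inr y) (t j)
        = (Real.sqrt 2)⁻¹ * Q y (Fin.castLE hr2 j) := by
      intro j
      rw [hO, htdef]
      simp only [ClipProof.Omat, Matrix.of_apply]
      rw [dif_pos (show ((Fin.castLE hr1 j : Fin d1):ℕ) < d2 from lt_of_lt_of_le j.isLt hr2)]
      congr 1
    rw [hG2H, hred]
    rw [Matrix.smul_apply, smul_eq_mul, Matrix.mul_apply, Finset.mul_sum]
    apply Finset.sum_congr rfl
    intro j _
    rw [Matrix.mul_diagonal, Matrix.transpose_apply, Matrix.submatrix_apply, id_eq,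
      hOentry j, ← hVf i j]
    ring
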